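/- Let T>0, p∈(1,∞), α∈(1/p,1), τ∈(0,T], and let G:[0,T]×ℝ^m→ℝ^m be a Carathéodory map with ‖G(t,x)‖ ≤ γ(t)+C‖x‖^{q/p} for some γ∈L^p(0,T) and q∈[1,∞). If φ:[0,τ)→ℝ^m is continuous, belongs to L^q(0,τ;ℝ^m), and satisfies φ(t) = u₀ + (1/Γ(α))∫₀^t (t−s)^{α−1}G(s,φ(s)) ds for all t∈[0,τ), then φ is uniformly continuous on [0,τ): indeed for 0<t₁<t₂<τ, ‖φ(t₁)−φ(t₂)‖ ≤ (2/Γ(α))((p−1)/(αp−1))^{1−1/p} (t₂−t₁)^{α−1/p} ‖G(·,φ(·))‖_{L^p(0,τ)}. Consequently φ extends uniquely to a continuous function on [0,τ]. -/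

import Mathlib

open MeasureTheory Set Filter Topology

lemma memLp_of_integrable_rpow {α : Type*} {mα : MeasurableSpace α} {μ : Measure α}
    {E : Type*} [NormedAddCommGroup E] {f : α → E} {p : ℝ} (hp : 0 < p)
    (hf : AEStronglyMeasurable f μ) (h : Integrable (fun x => ‖f x‖ ^ p) μ) :
    MemLp f (ENNReal.ofReal p) μ := by
  have hp0 : ENNReal.ofReal p ≠ 0 := by simp [ENNReal.ofReal_eq_zero, not_le, hp]
  have hpt : ENNReal.ofReal p ≠ ⊤ := ENNReal.ofReal_ne_top
  have h2 := memLp_norm_rpow_iff (q := ENNReal.ofReal p) (p := ENNReal.ofReal p) hf hp0 hpt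
  rw [ENNReal.div_self hp0 hpt] at h2
  refine h2.mp ?_
  rw [memLp_one_iff_integrable]
  simpa [ENNReal.toReal_ofReal hp.le] using h

lemma kernel_int {β : ℝ} (hβ : -1 < β) {a b c : ℝ} (hab : a ≤ b) (hbc : b ≤ c) :
    IntegrableOn (fun s => (c - s) ^ β) (Ioc a b) volume ∧
      ∫ s in Ioc a b, (c - s) ^ β = ((c - a) ^ (β + 1) - (c - b) ^ (β + 1)) / (β + 1) := by
  have h1 : IntervalIntegrable (fun x : ℝ => x ^ β) volume (c - a) (c - b) :=
    intervalIntegral.intervalIntegrable_rpow' hβ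
  have h2 : IntervalIntegrable (fun s : ℝ => (c - s) ^ β) volume a b := by
    simpa [sub_sub_cancel] using h1.comp_sub_left c
  constructor
  · rw [intervalIntegrable_iff, uIoc_of_le hab] at h2; exact h2
  · rw [← intervalIntegral.integral_of_le hab,
      intervalIntegral.integral_comp_sub_left (fun x : ℝ => x ^ β) c,
      integral_rpow (Or.inl hβ)]

lemma holder_bound {E : Type*} [NormedAddCommGroup E] [NormedSpace ℝ E] {S : Set ℝ}
    {k : ℝ → ℝ} {g : ℝ → E} {p q : ℝ} (hpq : Real.HolderConjugate q p)
    (hk : MemLp k (ENNReal.ofReal q) (volume.restrict S))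
    (hg : MemLp g (ENNReal.ofReal p) (volume.restrict S)) :
    ‖∫ s in S, k s • g s‖ ≤
      (∫ s in S, ‖k s‖ ^ q) ^ (1 / q) * (∫ s in S, ‖g s‖ ^ p) ^ (1 / p) := by
  calc ‖∫ s in S, k s • g s‖ ≤ ∫ s in S, ‖k s • g s‖ := norm_integral_le_integral_norm _
    _ = ∫ s in S, ‖k s‖ * ‖g s‖ := by simp [norm_smul]
    _ ≤ _ := by
      simpa [norm_norm] using
        integral_mul_norm_le_Lp_mul_Lq (μ := volume.restrict S) hpq hk hg.norm

lemma integrable_smul_holder {E : Type*} [NormedAddCommGroup E] [NormedSpace ℝ E]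
    {μ : Measure ℝ} {k : ℝ → ℝ} {g : ℝ → E} {p q : ℝ}
    (hpq : Real.HolderConjugate q p) (hk : MemLp k (ENNReal.ofReal q) μ)
    (hg : MemLp g (ENNReal.ofReal p) μ) : Integrable (fun s => k s • g s) μ := by
  rw [← memLp_one_iff_integrable]
  haveI : ENNReal.HolderTriple (ENNReal.ofReal q) (ENNReal.ofReal p) 1 :=
    ⟨by rw [inv_one]; exact hpq.inv_add_inv_ennreal⟩
  exact hg.smul hk

lemma real_add_rpow_le_rpow_add {a b r : ℝ} (ha : 0 ≤ a) (hb : 0 ≤ b) (hr : 1 ≤ r) :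
    a ^ r + b ^ r ≤ (a + b) ^ r := by
  lift a to NNReal using ha
  lift b to NNReal using hb
  have := NNReal.add_rpow_le_rpow_add a b hr
  rw [← NNReal.coe_le_coe] at this
  simpa [NNReal.coe_rpow] using this

theorem stmt_14 (T p α τ : ℝ) (hT : 0 < T) (hp : 1 < p) (hαp : 1 / p < α) (hα1 : α < 1)
    (hτ0 : 0 < τ) (hτT : τ ≤ T)
    (m : ℕ) (u₀ : EuclideanSpace ℝ (Fin m))
    (G : ℝ → EuclideanSpace ℝ (Fin m) → EuclideanSpace ℝ (Fin m))
    (hGmeas : ∀ x, Measurable (fun t => G t x))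
    (hGcont : ∀ᵐ t ∂(volume.restrict (Set.Icc 0 T)), Continuous (fun x => G t x))
    (γ : ℝ → ℝ)
    (hγ : MeasureTheory.MemLp γ (ENNReal.ofReal p) (volume.restrict (Set.Icc 0 T)))
    (C q : ℝ) (hC : 0 ≤ C) (hq : 1 ≤ q)
    (hgrowth : ∀ x, ∀ᵐ t ∂(volume.restrict (Set.Icc 0 T)),
      ‖G t x‖ ≤ γ t + C * ‖x‖ ^ (q / p))
    (φ : ℝ → EuclideanSpace ℝ (Fin m))
    (hφcont : ContinuousOn φ (Set.Ico 0 τ))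
    (hφLq : IntegrableOn (fun t => ‖φ t‖ ^ q) (Set.Ioo 0 τ))
    (hφeq : ∀ t ∈ Set.Ico (0:ℝ) τ,
      φ t = u₀ + (Real.Gamma α)⁻¹ • ∫ s in (0:ℝ)..t, ((t - s) ^ (α - 1)) • G s (φ s)) :
    (∀ t₁ t₂ : ℝ, 0 < t₁ → t₁ < t₂ → t₂ < τ →
        ‖φ t₁ - φ t₂‖
          ≤ (2 / Real.Gamma α) * ((p - 1) / (α * p - 1)) ^ (1 - 1 / p) *
            (t₂ - t₁) ^ (α - 1 / p) *
            (∫ s in (0:ℝ)..τ, ‖G s (φ s)‖ ^ p) ^ (1 / p)) ∧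
      ∃ ψ : ℝ → EuclideanSpace ℝ (Fin m),
        ContinuousOn ψ (Set.Icc 0 τ) ∧ Set.EqOn ψ φ (Set.Ico 0 τ) ∧
        ∀ ψ' : ℝ → EuclideanSpace ℝ (Fin m),
          ContinuousOn ψ' (Set.Icc 0 τ) → Set.EqOn ψ' φ (Set.Ico 0 τ) → ψ' τ = ψ τ := by
  classical
  -- basic numeric facts
  have hp0 : (0:ℝ) < p := one_pos.trans hp
  have hpne : p ≠ 0 := ne_of_gt hp0
  have hp1 : (0:ℝ) < p - 1 := sub_pos.2 hp
  have hαpos : 0 < α := lt_trans (by positivity) hαp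
  have hΓ : 0 < Real.Gamma α := Real.Gamma_pos_of_pos hαpos
  have hαp1 : 1 < α * p := by rw [div_lt_iff₀ hp0] at hαp; linarith
  have hαp1' : (0:ℝ) < α * p - 1 := by linarith
  set p' : ℝ := p / (p - 1) with hp'def
  have hp'1 : 1 < p' := by rw [hp'def, lt_div_iff₀ hp1]; linarith
  have hp'0 : (0:ℝ) < p' := one_pos.trans hp'1
  have hpq : Real.HolderConjugate p' p := (Real.HolderConjugate.conjExponent hp).symm
  set β : ℝ := (α - 1) * p' with hβdef
  have hβmul : β * (p - 1) = (α - 1) * p := by rw [hβdef, hp'def]; field_simp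
  have hβ : (-1:ℝ) < β := by nlinarith [hβmul]
  have hβ1 : (0:ℝ) < β + 1 := by linarith
  have hβ1eq : β + 1 = (α * p - 1) / (p - 1) := by
    rw [hβdef, hp'def]; field_simp; ring
  have hexp : (β + 1) * (1 / p') = α - 1 / p := by
    rw [hβ1eq, hp'def]; field_simp
  have h1p' : 1 / p' = 1 - 1 / p := by
    rw [hp'def, one_div_div]
    field_simp
  -- subset facts
  have hIooIcc : Ioo (0:ℝ) τ ⊆ Icc 0 T := fun x hx => ⟨hx.1.le, hx.2.le.trans hτT⟩
  have hrest_le : volume.restrict (Ioo (0:ℝ) τ) ≤ volume.restrict (Icc 0 T) :=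
    Measure.restrict_mono hIooIcc le_rfl
  have hGcont' : ∀ᵐ t ∂(volume.restrict (Ioo (0:ℝ) τ)), Continuous fun x => G t x :=
    ae_restrict_of_ae_restrict_of_subset hIooIcc hGcont
  have hφae : AEMeasurable φ (volume.restrict (Ioo (0:ℝ) τ)) :=
    (hφcont.mono Ioo_subset_Ico_self).aemeasurable measurableSet_Ioo
  -- a.e.-strong measurability of s ↦ G s (φ s)
  have hgaesm : AEStronglyMeasurable (fun s => G s (φ s)) (volume.restrict (Ioo (0:ℝ) τ)) := by
    have hB : volume.restrict (Ioo (0:ℝ) τ) {t | ¬ Continuous fun x => G t x} = 0 :=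
      ae_iff.mp hGcont'
    set N := toMeasurable (volume.restrict (Ioo (0:ℝ) τ)) {t | ¬ Continuous fun x => G t x}
      with hNdef
    have hNmeas : MeasurableSet N := measurableSet_toMeasurable _ _
    have hNnull : volume.restrict (Ioo (0:ℝ) τ) N = 0 := by
      rw [hNdef, measure_toMeasurable]; exact hB
    have hBN : {t | ¬ Continuous fun x => G t x} ⊆ N := subset_toMeasurable _ _
    have hunc : Measurable (Function.uncurry fun (x : EuclideanSpace ℝ (Fin m)) (t : ℝ) =>
        if t ∈ N then 0 else G t x) := by
      apply measurable_uncurry_of_continuous_of_measurable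
      · intro t
        by_cases h : t ∈ N
        · simp only [h, if_true]; exact continuous_const
        · simp only [h, if_false]
          by_contra hc
          exact h (hBN hc)
      · intro x
        exact Measurable.ite hNmeas measurable_const (hGmeas x)
    have hg'ae : AEMeasurable (fun t => if t ∈ N then 0 else G t (φ t))
        (volume.restrict (Ioo (0:ℝ) τ)) :=
      hunc.comp_aemeasurable (hφae.prodMk aemeasurable_id)
    have heq : (fun t => if t ∈ N then 0 else G t (φ t)) =ᵐ[volume.restrict (Ioo (0:ℝ) τ)]
        fun s => G s (φ s) := by
      have hN' : ∀ᵐ t ∂(volume.restrict (Ioo (0:ℝ) τ)), t ∉ N := by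
        rw [ae_iff]; simpa using hNnull
      filter_upwards [hN'] with t ht
      simp [ht]
    exact (hg'ae.congr heq).aestronglyMeasurable
  -- a.e. growth bound
  have hqp0 : (0:ℝ) ≤ q / p := by positivity
  have hbound : ∀ᵐ t ∂(volume.restrict (Icc (0:ℝ) T)),
      ∀ x : EuclideanSpace ℝ (Fin m), ‖G t x‖ ≤ γ t + C * ‖x‖ ^ (q / p) := by
    obtain ⟨d, hd⟩ := TopologicalSpace.exists_dense_seq (EuclideanSpace ℝ (Fin m))
    have hall : ∀ᵐ t ∂(volume.restrict (Icc (0:ℝ) T)),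
        ∀ n : ℕ, ‖G t (d n)‖ ≤ γ t + C * ‖d n‖ ^ (q / p) :=
      ae_all_iff.mpr fun n => hgrowth (d n)
    filter_upwards [hall, hGcont] with t ht htc x
    obtain ⟨u, hu_mem, hu_lim⟩ := mem_closure_iff_seq_limit.mp (hd x)
    have hle : ∀ n : ℕ, ‖G t (u n)‖ ≤ γ t + C * ‖u n‖ ^ (q / p) := by
      intro n
      obtain ⟨k, hk⟩ := hu_mem n
      rw [← hk]; exact ht k
    refine le_of_tendsto_of_tendsto' (((htc.tendsto x).comp hu_lim).norm) ?_ hle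
    have hcont : Continuous fun y : EuclideanSpace ℝ (Fin m) => γ t + C * ‖y‖ ^ (q / p) :=
      continuous_const.add (continuous_const.mul
        (continuous_norm.rpow_const fun y => Or.inr hqp0))
    exact (hcont.tendsto x).comp hu_lim
  have hbound' : ∀ᵐ t ∂(volume.restrict (Ioo (0:ℝ) τ)),
      ‖G t (φ t)‖ ≤ γ t + C * ‖φ t‖ ^ (q / p) := by
    filter_upwards [ae_restrict_of_ae_restrict_of_subset hIooIcc hbound] with t ht using ht (φ t)
  -- MemLp of s ↦ G s (φ s)
  have hφrpow_mem : MemLp (fun t => ‖φ t‖ ^ (q / p)) (ENNReal.ofReal p)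
      (volume.restrict (Ioo (0:ℝ) τ)) := by
    refine memLp_of_integrable_rpow hp0 ?_ ?_
    · exact (hφae.norm.pow aemeasurable_const).aestronglyMeasurable
    · have heq : (fun t => ‖(‖φ t‖ ^ (q / p) : ℝ)‖ ^ p) = fun t => ‖φ t‖ ^ q := by
        funext t
        rw [Real.norm_of_nonneg (Real.rpow_nonneg (norm_nonneg _) _),
          ← Real.rpow_mul (norm_nonneg _), div_mul_cancel₀ _ hpne]
      rw [heq]; exact hφLq
  have hg_mem : MemLp (fun s => G s (φ s)) (ENNReal.ofReal p)
      (volume.restrict (Ioo (0:ℝ) τ)) := by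
    have hsum : MemLp (fun t => γ t + C * ‖φ t‖ ^ (q / p)) (ENNReal.ofReal p)
        (volume.restrict (Ioo (0:ℝ) τ)) :=
      (hγ.mono_measure hrest_le).add (hφrpow_mem.const_mul C)
    refine MemLp.of_le hsum hgaesm ?_
    filter_upwards [hbound'] with t ht
    simpa [Real.norm_eq_abs] using ht.trans (le_abs_self _)
  -- integral of ‖g‖^p
  have hgint : IntegrableOn (fun s => ‖G s (φ s)‖ ^ p) (Ioo (0:ℝ) τ) := by
    have h := hg_mem.integrable_norm_rpow
      (by simp [ENNReal.ofReal_eq_zero, not_le, hp0]) ENNReal.ofReal_ne_top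
    exact (by simpa [ENNReal.toReal_ofReal hp0.le] using h :
      Integrable (fun x => ‖G x (φ x)‖ ^ p) (volume.restrict (Ioo 0 τ)))
  have hAnonneg : 0 ≤ ∫ s in Ioo (0:ℝ) τ, ‖G s (φ s)‖ ^ p :=
    setIntegral_nonneg measurableSet_Ioo fun s _ => Real.rpow_nonneg (norm_nonneg _) _
  have hgoalint : ∫ s in (0:ℝ)..τ, ‖G s (φ s)‖ ^ p = ∫ s in Ioo (0:ℝ) τ, ‖G s (φ s)‖ ^ p := by
    rw [intervalIntegral.integral_of_le hτ0.le, integral_Ioc_eq_integral_Ioo]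
  set A : ℝ := (∫ s in Ioo (0:ℝ) τ, ‖G s (φ s)‖ ^ p) ^ (1 / p) with hAdef
  have hA0 : 0 ≤ A := Real.rpow_nonneg hAnonneg _
  -- mono of the g-integral
  have hgmono : ∀ S : Set ℝ, S ⊆ Ioo 0 τ → MeasurableSet S →
      (∫ s in S, ‖G s (φ s)‖ ^ p) ^ (1 / p) ≤ A := by
    intro S hsub hSm
    rw [hAdef]
    refine Real.rpow_le_rpow
      (setIntegral_nonneg hSm fun s _ => Real.rpow_nonneg (norm_nonneg _) _) ?_ (by positivity)
    refine setIntegral_mono_set hgint ?_ (HasSubset.Subset.eventuallyLE hsub)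
    exact Eventually.of_forall fun s => Real.rpow_nonneg (norm_nonneg _) _
  -- kernel MemLp and L^{p'} integral on subintervals
  have kmem : ∀ a b c : ℝ, a ≤ b → b ≤ c →
      MemLp (fun s => (c - s) ^ (α - 1)) (ENNReal.ofReal p') (volume.restrict (Ioc a b)) ∧
      ∫ s in Ioc a b, ‖(c - s) ^ (α - 1)‖ ^ p'
        = ((c - a) ^ (β + 1) - (c - b) ^ (β + 1)) / (β + 1) := by
    intro a b c hab hbc
    obtain ⟨hint, hval⟩ := kernel_int hβ hab hbc
    have heqset : ∀ s ∈ Ioc a b, (c - s) ^ β = ‖(c - s) ^ (α - 1)‖ ^ p' := by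
      intro s hs
      have h0 : (0:ℝ) ≤ c - s := by
        have := hs.2; linarith
      rw [Real.norm_of_nonneg (Real.rpow_nonneg h0 _), ← Real.rpow_mul h0, hβdef]
    have hintnorm : IntegrableOn (fun s => ‖(c - s) ^ (α - 1)‖ ^ p') (Ioc a b) :=
      hint.congr_fun heqset measurableSet_Ioc
    refine ⟨?_, ?_⟩
    · refine memLp_of_integrable_rpow hp'0 ?_ hintnorm
      exact ((measurable_const.sub measurable_id).pow measurable_const).aestronglyMeasurable
    · rw [← setIntegral_congr_fun measurableSet_Ioc heqset, hval]
  -- the key modulus-of-continuity estimate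
  have key : ∀ t₁ t₂ : ℝ, 0 < t₁ → t₁ < t₂ → t₂ < τ →
      ‖φ t₁ - φ t₂‖ ≤ (2 / Real.Gamma α) * ((p - 1) / (α * p - 1)) ^ (1 - 1 / p) *
        (t₂ - t₁) ^ (α - 1 / p) * A := by
    intro t₁ t₂ h01 h12 h2τ
    have hS₁ : Ioc (0:ℝ) t₁ ⊆ Ioo 0 τ := fun x hx => ⟨hx.1, lt_of_le_of_lt hx.2 (h12.trans h2τ)⟩
    have hS₂ : Ioc t₁ t₂ ⊆ Ioo (0:ℝ) τ := fun x hx => ⟨h01.trans hx.1, lt_of_le_of_lt hx.2 h2τ⟩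
    have hgS₁ : MemLp (fun s => G s (φ s)) (ENNReal.ofReal p)
        (volume.restrict (Ioc (0:ℝ) t₁)) :=
      hg_mem.mono_measure (Measure.restrict_mono hS₁ le_rfl)
    have hgS₂ : MemLp (fun s => G s (φ s)) (ENNReal.ofReal p)
        (volume.restrict (Ioc t₁ t₂)) :=
      hg_mem.mono_measure (Measure.restrict_mono hS₂ le_rfl)
    obtain ⟨hkAmem, _⟩ := kmem 0 t₁ t₁ h01.le le_rfl
    obtain ⟨hkBmem, hkBval⟩ := kmem 0 t₁ t₂ h01.le h12.le
    obtain ⟨hk2mem, hk2val⟩ := kmem t₁ t₂ t₂ h12.le le_rfl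
    -- the difference kernel on (0, t₁)
    have hk1meas : AEStronglyMeasurable
        (fun s => (t₁ - s) ^ (α - 1) - (t₂ - s) ^ (α - 1))
        (volume.restrict (Ioc (0:ℝ) t₁)) :=
      (((measurable_const.sub measurable_id).pow measurable_const).sub
        ((measurable_const.sub measurable_id).pow measurable_const)).aestronglyMeasurable
    have haeIoo : ∀ᵐ s ∂(volume.restrict (Ioc (0:ℝ) t₁)), s ∈ Ioc (0:ℝ) t₁ ∧ s ≠ t₁ := by
      refine (ae_restrict_mem measurableSet_Ioc).and (ae_restrict_of_ae ?_)
      rw [ae_iff]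
      simpa using measure_singleton t₁
    have hptbound : ∀ᵐ s ∂(volume.restrict (Ioc (0:ℝ) t₁)),
        ‖(t₁ - s) ^ (α - 1) - (t₂ - s) ^ (α - 1)‖ ^ p'
          ≤ (t₁ - s) ^ β - (t₂ - s) ^ β := by
      filter_upwards [haeIoo] with s hs
      obtain ⟨⟨hs0, hs1⟩, hsne⟩ := hs
      have h1' : (0:ℝ) < t₁ - s := sub_pos.2 (lt_of_le_of_ne hs1 hsne)
      have h2le : t₁ - s ≤ t₂ - s := by linarith
      have h2' : (0:ℝ) < t₂ - s := lt_of_lt_of_le h1' h2le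
      have hba : (t₂ - s) ^ (α - 1) ≤ (t₁ - s) ^ (α - 1) :=
        Real.rpow_le_rpow_of_nonpos h1' h2le (by linarith)
      have hb0 : (0:ℝ) ≤ (t₂ - s) ^ (α - 1) := Real.rpow_nonneg h2'.le _
      rw [Real.norm_of_nonneg (sub_nonneg.2 hba)]
      have hkey := real_add_rpow_le_rpow_add (a := (t₁ - s) ^ (α - 1) - (t₂ - s) ^ (α - 1))
        (b := (t₂ - s) ^ (α - 1)) (sub_nonneg.2 hba) hb0 hp'1.le
      rw [sub_add_cancel] at hkey
      have e1 : ((t₁ - s) ^ (α - 1)) ^ p' = (t₁ - s) ^ β := by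
        rw [← Real.rpow_mul h1'.le, ← hβdef]
      have e2 : ((t₂ - s) ^ (α - 1)) ^ p' = (t₂ - s) ^ β := by
        rw [← Real.rpow_mul h2'.le, ← hβdef]
      rw [e1, e2] at hkey
      linarith
    obtain ⟨hiA, hvA⟩ := kernel_int hβ (a := 0) (b := t₁) (c := t₁) h01.le le_rfl
    obtain ⟨hiB, hvB⟩ := kernel_int hβ (a := 0) (b := t₁) (c := t₂) h01.le h12.le
    have hRHSint : IntegrableOn (fun s => (t₁ - s) ^ β - (t₂ - s) ^ β) (Ioc (0:ℝ) t₁) :=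
      hiA.sub hiB
    have hk1int : IntegrableOn
        (fun s => ‖(t₁ - s) ^ (α - 1) - (t₂ - s) ^ (α - 1)‖ ^ p') (Ioc (0:ℝ) t₁) := by
      refine Integrable.mono' hRHSint ?_ ?_
      · exact (hk1meas.norm.aemeasurable.pow aemeasurable_const).aestronglyMeasurable
      · filter_upwards [hptbound] with s hs
        rw [Real.norm_of_nonneg (Real.rpow_nonneg (norm_nonneg _) _)]
        exact hs
    have hk1mem : MemLp (fun s => (t₁ - s) ^ (α - 1) - (t₂ - s) ^ (α - 1))
        (ENNReal.ofReal p') (volume.restrict (Ioc (0:ℝ) t₁)) :=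
      memLp_of_integrable_rpow hp'0 hk1meas hk1int
    have hmono : (t₁:ℝ) ^ (β + 1) ≤ t₂ ^ (β + 1) := Real.rpow_le_rpow h01.le h12.le hβ1.le
    have hk1val : ∫ s in Ioc (0:ℝ) t₁, ‖(t₁ - s) ^ (α - 1) - (t₂ - s) ^ (α - 1)‖ ^ p'
        ≤ (t₂ - t₁) ^ (β + 1) / (β + 1) := by
      have hle1 := integral_mono_ae hk1int hRHSint hptbound
      rw [integral_sub hiA hiB, hvA, hvB] at hle1
      refine hle1.trans ?_
      simp only [sub_zero, sub_self, Real.zero_rpow hβ1.ne']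
      rw [div_sub_div_same, div_le_div_iff_of_pos_right hβ1]
      linarith
    have hk2val' : ∫ s in Ioc t₁ t₂, ‖(t₂ - s) ^ (α - 1)‖ ^ p'
        = (t₂ - t₁) ^ (β + 1) / (β + 1) := by
      rw [hk2val]
      simp only [sub_self, Real.zero_rpow hβ1.ne', sub_zero]
    -- interval integrabilities
    have hintA : IntervalIntegrable (fun s => (t₁ - s) ^ (α - 1) • G s (φ s)) volume 0 t₁ := by
      rw [intervalIntegrable_iff, uIoc_of_le h01.le]
      exact integrable_smul_holder hpq hkAmem hgS₁
    have hintB1 : IntervalIntegrable (fun s => (t₂ - s) ^ (α - 1) • G s (φ s)) volume 0 t₁ := by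
      rw [intervalIntegrable_iff, uIoc_of_le h01.le]
      exact integrable_smul_holder hpq hkBmem hgS₁
    have hintB2 : IntervalIntegrable (fun s => (t₂ - s) ^ (α - 1) • G s (φ s)) volume t₁ t₂ := by
      rw [intervalIntegrable_iff, uIoc_of_le h12.le]
      exact integrable_smul_holder hpq hk2mem hgS₂
    -- representation of the difference
    have ht₁mem : t₁ ∈ Ico (0:ℝ) τ := ⟨h01.le, h12.trans h2τ⟩
    have ht₂mem : t₂ ∈ Ico (0:ℝ) τ := ⟨(h01.trans h12).le, h2τ⟩
    have hsplit : (∫ s in (0:ℝ)..t₂, (t₂ - s) ^ (α - 1) • G s (φ s))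
        = (∫ s in (0:ℝ)..t₁, (t₂ - s) ^ (α - 1) • G s (φ s))
          + ∫ s in t₁..t₂, (t₂ - s) ^ (α - 1) • G s (φ s) :=
      (intervalIntegral.integral_add_adjacent_intervals hintB1 hintB2).symm
    have hdiff : (∫ s in (0:ℝ)..t₁, (t₁ - s) ^ (α - 1) • G s (φ s))
        - (∫ s in (0:ℝ)..t₁, (t₂ - s) ^ (α - 1) • G s (φ s))
        = ∫ s in (0:ℝ)..t₁, ((t₁ - s) ^ (α - 1) - (t₂ - s) ^ (α - 1)) • G s (φ s) := by
      rw [← intervalIntegral.integral_sub hintA hintB1]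
      simp only [sub_smul]
    have hrepr : φ t₁ - φ t₂ = (Real.Gamma α)⁻¹ •
        ((∫ s in (0:ℝ)..t₁, ((t₁ - s) ^ (α - 1) - (t₂ - s) ^ (α - 1)) • G s (φ s))
          - ∫ s in t₁..t₂, (t₂ - s) ^ (α - 1) • G s (φ s)) := by
      rw [hφeq t₁ ht₁mem, hφeq t₂ ht₂mem, hsplit, ← hdiff]
      simp only [smul_sub, smul_add]
      abel
    have hnorm : ‖φ t₁ - φ t₂‖ ≤ (Real.Gamma α)⁻¹ *
        (‖∫ s in (0:ℝ)..t₁, ((t₁ - s) ^ (α - 1) - (t₂ - s) ^ (α - 1)) • G s (φ s)‖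
          + ‖∫ s in t₁..t₂, (t₂ - s) ^ (α - 1) • G s (φ s)‖) := by
      rw [hrepr, norm_smul, Real.norm_eq_abs, abs_of_nonneg (inv_nonneg.2 hΓ.le)]
      exact mul_le_mul_of_nonneg_left (norm_sub_le _ _) (inv_nonneg.2 hΓ.le)
    -- Hölder bounds
    have hDnn : (0:ℝ) ≤ ((t₂ - t₁) ^ (β + 1) / (β + 1)) ^ (1 / p') :=
      Real.rpow_nonneg (div_nonneg (Real.rpow_nonneg (by linarith) _) hβ1.le) _
    have hB1 : ‖∫ s in (0:ℝ)..t₁, ((t₁ - s) ^ (α - 1) - (t₂ - s) ^ (α - 1)) • G s (φ s)‖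
        ≤ ((t₂ - t₁) ^ (β + 1) / (β + 1)) ^ (1 / p') * A := by
      rw [intervalIntegral.integral_of_le h01.le]
      refine (holder_bound hpq hk1mem hgS₁).trans ?_
      refine mul_le_mul ?_ (hgmono _ hS₁ measurableSet_Ioc) ?_ hDnn
      · exact Real.rpow_le_rpow (setIntegral_nonneg measurableSet_Ioc fun s _ =>
          Real.rpow_nonneg (norm_nonneg _) _) hk1val (by positivity)
      · exact Real.rpow_nonneg (setIntegral_nonneg measurableSet_Ioc fun s _ =>
          Real.rpow_nonneg (norm_nonneg _) _) _
    have hB2 : ‖∫ s in t₁..t₂, (t₂ - s) ^ (α - 1) • G s (φ s)‖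
        ≤ ((t₂ - t₁) ^ (β + 1) / (β + 1)) ^ (1 / p') * A := by
      rw [intervalIntegral.integral_of_le h12.le]
      refine (holder_bound hpq hk2mem hgS₂).trans ?_
      refine mul_le_mul (le_of_eq ?_) (hgmono _ hS₂ measurableSet_Ioc) ?_ hDnn
      · rw [hk2val']
      · exact Real.rpow_nonneg (setIntegral_nonneg measurableSet_Ioc fun s _ =>
          Real.rpow_nonneg (norm_nonneg _) _) _
    have hD : ((t₂ - t₁) ^ (β + 1) / (β + 1)) ^ (1 / p')
        = ((p - 1) / (α * p - 1)) ^ (1 - 1 / p) * (t₂ - t₁) ^ (α - 1 / p) := by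
      have h21 : (0:ℝ) ≤ t₂ - t₁ := by linarith
      calc ((t₂ - t₁) ^ (β + 1) / (β + 1)) ^ (1 / p')
          = ((t₂ - t₁) ^ (β + 1)) ^ (1 / p') / (β + 1) ^ (1 / p') :=
            Real.div_rpow (Real.rpow_nonneg h21 _) hβ1.le _
        _ = (t₂ - t₁) ^ (α - 1 / p) / (β + 1) ^ (1 / p') := by
            rw [← Real.rpow_mul h21, hexp]
        _ = ((p - 1) / (α * p - 1)) ^ (1 - 1 / p) * (t₂ - t₁) ^ (α - 1 / p) := by
            rw [div_eq_mul_inv, ← Real.inv_rpow hβ1.le, hβ1eq, inv_div, h1p', mul_comm]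
    calc ‖φ t₁ - φ t₂‖
        ≤ (Real.Gamma α)⁻¹ *
          (((t₂ - t₁) ^ (β + 1) / (β + 1)) ^ (1 / p') * A
            + ((t₂ - t₁) ^ (β + 1) / (β + 1)) ^ (1 / p') * A) :=
          hnorm.trans (mul_le_mul_of_nonneg_left (add_le_add hB1 hB2) (inv_nonneg.2 hΓ.le))
      _ = (2 / Real.Gamma α) * ((p - 1) / (α * p - 1)) ^ (1 - 1 / p) *
            (t₂ - t₁) ^ (α - 1 / p) * A := by
          rw [hD]; field_simp; ring
  constructor
  · intro t₁ t₂ h1 h2 h3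
    rw [hgoalint]
    exact key t₁ t₂ h1 h2 h3
  -- existence and uniqueness of a continuous extension
  · set K : ℝ := (2 / Real.Gamma α) * ((p - 1) / (α * p - 1)) ^ (1 - 1 / p) * A with hKdef
    have key2 : ∀ t₁ t₂ : ℝ, 0 < t₁ → t₁ < t₂ → t₂ < τ →
        ‖φ t₁ - φ t₂‖ ≤ K * (t₂ - t₁) ^ (α - 1 / p) := by
      intro t₁ t₂ h1 h2 h3
      refine (key t₁ t₂ h1 h2 h3).trans_eq ?_
      rw [hKdef]; ring
    have heexp : 0 < α - 1 / p := by linarith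
    have hneBot : (𝓝[Ico (0:ℝ) τ] τ).NeBot := by
      refine mem_closure_iff_nhdsWithin_neBot.mp ?_
      rw [closure_Ico hτ0.ne]
      exact ⟨hτ0.le, le_rfl⟩
    haveI := hneBot
    have hcauchy : Cauchy (Filter.map φ (𝓝[Ico (0:ℝ) τ] τ)) := by
      rw [Metric.cauchy_iff]
      refine ⟨Filter.map_neBot, ?_⟩
      intro ε hε
      have hca : ContinuousAt (fun x : ℝ => K * x ^ (α - 1 / p)) 0 :=
        continuousAt_const.mul (Real.continuousAt_rpow_const 0 _ (Or.inr heexp.le))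
      have h0 : K * (0:ℝ) ^ (α - 1 / p) = 0 := by
        rw [Real.zero_rpow heexp.ne']; ring
      have htd : Tendsto (fun x : ℝ => K * x ^ (α - 1 / p)) (𝓝 0) (𝓝 0) := by
        have h1 : Tendsto (fun x : ℝ => K * x ^ (α - 1 / p)) (𝓝 0)
            (𝓝 (K * (0:ℝ) ^ (α - 1 / p))) := hca
        rwa [h0] at h1
      obtain ⟨δ, hδ0, hδ⟩ := Metric.eventually_nhds_iff.mp (htd.eventually_lt_const hε)
      refine ⟨φ '' (Ioo (max (τ - δ) (τ / 2)) τ), ?_, ?_⟩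
      · rw [Filter.mem_map]
        have hsub : Ioo (max (τ - δ) (τ / 2)) τ ∈ 𝓝[Ico (0:ℝ) τ] τ := by
          refine mem_nhdsWithin.mpr ⟨Ioi (max (τ - δ) (τ / 2)), isOpen_Ioi, ?_, ?_⟩
          · simp only [mem_Ioi]
            exact max_lt (by linarith) (by linarith)
          · rintro x ⟨hx1, hx2⟩
            exact ⟨hx1, hx2.2⟩
        exact mem_of_superset hsub (subset_preimage_image φ _)
      · have hp2 : ∀ a b : ℝ, a ∈ Ioo (max (τ - δ) (τ / 2)) τ →
            b ∈ Ioo (max (τ - δ) (τ / 2)) τ → a < b → dist (φ a) (φ b) < ε := by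
          intro a b ha hb hab
          have hτ2 : (0:ℝ) < τ / 2 := by linarith
          have h0a : 0 < a := lt_of_lt_of_le hτ2 ((le_max_right _ _).trans ha.1.le)
          rw [dist_eq_norm]
          refine (key2 a b h0a hab hb.2).trans_lt ?_
          have hba : b - a < δ := by
            have h1 := le_max_left (τ - δ) (τ / 2)
            have h2 := ha.1
            have h3 := hb.2
            linarith
          have hdist : dist (b - a) 0 < δ := by
            rw [Real.dist_eq, sub_zero, abs_of_nonneg (by linarith : (0:ℝ) ≤ b - a)]
            exact hba
          exact hδ hdist
        rintro x ⟨x₁, hx₁, rfl⟩ y ⟨y₁, hy₁, rfl⟩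
        rcases lt_trichotomy x₁ y₁ with h | h | h
        · exact hp2 x₁ y₁ hx₁ hy₁ h
        · rw [h]; simpa [dist_self] using hε
        · rw [dist_comm]; exact hp2 y₁ x₁ hy₁ hx₁ h
    obtain ⟨L, hL⟩ := CompleteSpace.complete hcauchy
    have hLt : Tendsto φ (𝓝[Ico (0:ℝ) τ] τ) (𝓝 L) := hL
    refine ⟨fun t => if t = τ then L else φ t, ?_, ?_, ?_⟩
    · intro t ht
      by_cases htau : t = τ
      · subst htau
        have hIcc : Icc (0:ℝ) t = Ico (0:ℝ) t ∪ {t} := (Ico_union_right hτ0.le).symm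
        show Tendsto (fun s => if s = t then L else φ s) (𝓝[Icc (0:ℝ) t] t)
          (𝓝 (if t = t then L else φ t))
        rw [if_pos rfl, hIcc, nhdsWithin_union, tendsto_sup]
        constructor
        · refine Tendsto.congr' ?_ hLt
          filter_upwards [self_mem_nhdsWithin] with x hx
          rw [if_neg (ne_of_lt hx.2)]
        · rw [nhdsWithin_singleton]
          simpa using tendsto_pure_nhds (fun s => if s = t then L else φ s) t
      · have htlt : t < τ := lt_of_le_of_ne ht.2 htau
        have h1 : ContinuousWithinAt φ (Ico (0:ℝ) τ) t := hφcont t ⟨ht.1, htlt⟩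
        have hIccIco : Icc (0:ℝ) τ ∩ Iio τ = Ico (0:ℝ) τ := by
          ext x
          simp only [mem_inter_iff, mem_Icc, mem_Iio, mem_Ico]
          exact ⟨fun h => ⟨h.1.1, h.2⟩, fun h => ⟨⟨h.1, h.2.le⟩, h.2⟩⟩
        have hrestr : 𝓝[Icc (0:ℝ) τ] t = 𝓝[Ico (0:ℝ) τ] t := by
          rw [nhdsWithin_restrict'' (Icc (0:ℝ) τ)
            (nhdsWithin_le_nhds (Iio_mem_nhds htlt)), hIccIco]
        show Tendsto (fun s => if s = τ then L else φ s) (𝓝[Icc (0:ℝ) τ] t)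
          (𝓝 (if t = τ then L else φ t))
        rw [hrestr, if_neg htau]
        refine Tendsto.congr' ?_ h1
        filter_upwards [self_mem_nhdsWithin] with x hx
        rw [if_neg (ne_of_lt hx.2)]
    · intro t ht
      exact if_neg (ne_of_lt ht.2)
    · intro ψ' hψ'c hψ'eq
      have h1 : Tendsto ψ' (𝓝[Ico (0:ℝ) τ] τ) (𝓝 (ψ' τ)) :=
        (hψ'c τ (right_mem_Icc.mpr hτ0.le)).mono Ico_subset_Icc_self
      have h2 : Tendsto ψ' (𝓝[Ico (0:ℝ) τ] τ) (𝓝 L) := by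
        refine Tendsto.congr' ?_ hLt
        filter_upwards [self_mem_nhdsWithin] with x hx
        exact (hψ'eq hx).symm
      have hLeq : ψ' τ = L := tendsto_nhds_unique h1 h2
      show ψ' τ = if τ = τ then L else φ τ
      rw [hLeq, if_pos rfl]
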